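/- Energy inequality for one step of the monolithic IMEX-SD scheme in abstract form: if $a_{n+1} - a_n + \tau v_{n+1} \leq \tau v_n + \frac{\varepsilon\tau}{T}a_n + \left(\tau + \frac{T}{\varepsilon}\right)\tau f_{n+1}^2$ holds for all $0 \leq n \leq N-1$ with all quantities non-negative, $\tau = T/N$, $N \geq 2$, $\varepsilon > 0$, then $a_N + \tau v_N + \frac{\varepsilon\tau}{T}\sum_{n=1}^{N-1}\tau v_n \leq e^{\varepsilon}\left[\left(1 + \frac{\varepsilon\tau}{T}\right)a_0 + \tau v_0 + \left(\tau + \frac{T}{\varepsilon}\right)\sum_{n=1}^N \tau f_n^2\right]$. -/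

import Mathlib

open Finset in
/-- Energy inequality for the monolithic IMEX stress-divergence scheme (abstract form of
Theorem 3.3). -/
theorem monolithic_IMEX_SD_stability
    (N : ℕ) (hN : 2 ≤ N) (T ε : ℝ) (hT : 0 < T) (hε : 0 < ε)
    (τ : ℝ) (hτ : τ = T / N)
    (a v f : ℕ → ℝ)
    (ha : ∀ n, 0 ≤ a n) (hv : ∀ n, 0 ≤ v n) (hf : ∀ n, 0 ≤ f n)
    (hrec : ∀ n, n ≤ N - 1 →
      a (n + 1) - a n + τ * v (n + 1) ≤
        τ * v n + (ε * τ / T) * a n + (τ + T / ε) * τ * f (n + 1) ^ 2) :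
    a N + τ * v N + (ε * τ / T) * ∑ n ∈ Icc 1 (N - 1), τ * v n ≤
      Real.exp ε * ((1 + ε * τ / T) * a 0 + τ * v 0 +
        (τ + T / ε) * ∑ n ∈ Icc 1 N, τ * f n ^ 2) := by
  have hNpos : 0 < (N : ℝ) := by positivity
  have hτpos : 0 < τ := by rw [hτ]; positivity
  set α : ℝ := ε * τ / T with hα_def
  set C : ℝ := τ + T / ε with hC_def
  have hαpos : 0 < α := by positivity
  have hCpos : 0 < C := by positivity
  have hαN : (N : ℝ) * α = ε := by
    rw [hα_def, hτ]; field_simp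
  set b : ℕ → ℝ := fun n => a n + τ * v n with hb_def
  have hbnn : ∀ n, 0 ≤ b n := fun n => by
    have := ha n; have := hv n; have := hτpos.le; have := mul_nonneg hτpos.le (hv n)
    simp only [hb_def]; linarith
  set S : ℝ := ∑ n ∈ Icc 1 N, τ * f n ^ 2 with hS_def
  have hSnn : 0 ≤ S := Finset.sum_nonneg fun n _ => by positivity
  set B : ℝ := (1 + α) * a 0 + τ * v 0 + C * S with hB_def
  have hBnn : 0 ≤ B := by
    have := ha 0; have := hv 0
    have h1 : 0 ≤ (1 + α) * a 0 := by positivity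
    have h2 : 0 ≤ τ * v 0 := by positivity
    have h3 : 0 ≤ C * S := by positivity
    linarith
  -- one-step inequalities
  have hstep : ∀ n, n < N → b (n + 1) ≤ b n + α * a n + C * (τ * f (n + 1) ^ 2) := by
    intro n hn
    have h := hrec n (by omega)
    simp only [hb_def]
    nlinarith [h]
  have hstep' : ∀ n, n < N → b (n + 1) ≤ (1 + α) * b n + C * (τ * f (n + 1) ^ 2) := by
    intro n hn
    have h := hstep n hn
    have h2 : α * a n ≤ α * b n := by
      have : a n ≤ b n := by
        have := mul_nonneg hτpos.le (hv n); simp only [hb_def]; linarith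
      exact mul_le_mul_of_nonneg_left this hαpos.le
    nlinarith
  -- telescoped sum
  have htel : ∀ m, m ≤ N →
      b m ≤ b 0 + α * ∑ k ∈ range m, a k + C * ∑ k ∈ Icc 1 m, τ * f k ^ 2 := by
    intro m
    induction m with
    | zero => intro _; simp
    | succ m ih =>
      intro hm
      have ihm := ih (by omega)
      have hs := hstep m (by omega)
      have hsum1 : ∑ k ∈ range (m + 1), a k = (∑ k ∈ range m, a k) + a m :=
        Finset.sum_range_succ _ _
      have hsum2 : ∑ k ∈ Icc 1 (m + 1), τ * f k ^ 2
          = (∑ k ∈ Icc 1 m, τ * f k ^ 2) + τ * f (m + 1) ^ 2 :=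
        Finset.sum_Icc_succ_top (by omega) _
      rw [hsum1, hsum2]
      nlinarith
  -- Gronwall bound
  have hg : ∀ m, m ≤ N → b m ≤ (1 + α) ^ m * B := by
    have key : ∀ m, m ≤ N →
        b m ≤ (1 + α) ^ m * (b 0 + C * ∑ k ∈ Icc 1 m, τ * f k ^ 2) := by
      intro m
      induction m with
      | zero => intro _; simp
      | succ m ih =>
        intro hm
        have ihm := ih (by omega)
        have hs := hstep' m (by omega)
        have hsum2 : ∑ k ∈ Icc 1 (m + 1), τ * f k ^ 2
            = (∑ k ∈ Icc 1 m, τ * f k ^ 2) + τ * f (m + 1) ^ 2 :=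
          Finset.sum_Icc_succ_top (by omega) _
        have hpow1 : (1:ℝ) ≤ (1 + α) ^ (m + 1) :=
          one_le_pow₀ (by linarith)
        have hfnn : 0 ≤ C * (τ * f (m + 1) ^ 2) := by positivity
        have h1 : b (m + 1) ≤ (1 + α) ^ (m + 1) * (b 0 + C * ∑ k ∈ Icc 1 m, τ * f k ^ 2)
            + C * (τ * f (m + 1) ^ 2) := by
          calc b (m + 1) ≤ (1 + α) * b m + C * (τ * f (m + 1) ^ 2) := hs
            _ ≤ (1 + α) * ((1 + α) ^ m * (b 0 + C * ∑ k ∈ Icc 1 m, τ * f k ^ 2))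
                + C * (τ * f (m + 1) ^ 2) := by
                have := mul_le_mul_of_nonneg_left ihm (by linarith : (0:ℝ) ≤ 1 + α)
                linarith
            _ = (1 + α) ^ (m + 1) * (b 0 + C * ∑ k ∈ Icc 1 m, τ * f k ^ 2)
                + C * (τ * f (m + 1) ^ 2) := by ring
        rw [hsum2]
        have h2 : C * (τ * f (m + 1) ^ 2) ≤ (1 + α) ^ (m + 1) * (C * (τ * f (m + 1) ^ 2)) :=
          le_mul_of_one_le_left hfnn hpow1
        nlinarith
    intro m hm
    have h := key m hm
    have hmono : b 0 + C * ∑ k ∈ Icc 1 m, τ * f k ^ 2 ≤ B := by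
      have hsub : ∑ k ∈ Icc 1 m, τ * f k ^ 2 ≤ S := by
        rw [hS_def]
        apply Finset.sum_le_sum_of_subset_of_nonneg
        · exact Finset.Icc_subset_Icc_right hm
        · intro i _ _; positivity
      have h0 : 0 ≤ α * a 0 := mul_nonneg hαpos.le (ha 0)
      have := mul_le_mul_of_nonneg_left hsub hCpos.le
      simp only [hB_def, hb_def]
      linarith
    calc b m ≤ (1 + α) ^ m * (b 0 + C * ∑ k ∈ Icc 1 m, τ * f k ^ 2) := h
      _ ≤ (1 + α) ^ m * B := mul_le_mul_of_nonneg_left hmono (by positivity)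
  -- decompose range N
  have hins : (range N : Finset ℕ) = insert 0 (Icc 1 (N - 1)) := by
    ext i; simp only [Finset.mem_range, Finset.mem_insert, Finset.mem_Icc]; omega
  have h0notin : (0:ℕ) ∉ Icc 1 (N - 1) := by simp
  -- main chain
  have hmain : b N + α * ∑ n ∈ Icc 1 (N - 1), τ * v n
      ≤ B + α * ∑ n ∈ Icc 1 (N - 1), b n := by
    have ht := htel N le_rfl
    have hra : ∑ k ∈ range N, a k = a 0 + ∑ k ∈ Icc 1 (N - 1), a k := by
      rw [hins, Finset.sum_insert h0notin]
    have hbs : ∑ n ∈ Icc 1 (N - 1), b n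
        = (∑ n ∈ Icc 1 (N - 1), a n) + ∑ n ∈ Icc 1 (N - 1), τ * v n := by
      simp only [hb_def]; rw [Finset.sum_add_distrib]
    rw [hra, mul_add] at ht
    rw [hbs, mul_add]
    have hBeq : B = b 0 + α * a 0 + C * S := by simp only [hB_def, hb_def]; ring
    linarith
  -- geometric sum
  have hgeo : 1 + α * ∑ n ∈ Icc 1 (N - 1), (1 + α) ^ n ≤ (1 + α) ^ N := by
    have hgs : (∑ i ∈ range N, (1 + α) ^ i) * ((1 + α) - 1) = (1 + α) ^ N - 1 :=
      geom_sum_mul _ _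
    have hrp : ∑ i ∈ range N, (1 + α) ^ i
        = 1 + ∑ n ∈ Icc 1 (N - 1), (1 + α) ^ n := by
      rw [hins, Finset.sum_insert h0notin]; simp
    rw [hrp] at hgs
    have key : 1 + α * ∑ n ∈ Icc 1 (N - 1), (1 + α) ^ n = (1 + α) ^ N - α := by
      linear_combination hgs
    linarith
  have hbsum : ∑ n ∈ Icc 1 (N - 1), b n ≤ (∑ n ∈ Icc 1 (N - 1), (1 + α) ^ n) * B := by
    rw [Finset.sum_mul]
    apply Finset.sum_le_sum
    intro i hi
    simp only [Finset.mem_Icc] at hi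
    exact hg i (by omega)
  have hfinal : b N + α * ∑ n ∈ Icc 1 (N - 1), τ * v n ≤ (1 + α) ^ N * B := by
    have h1 : B + α * ∑ n ∈ Icc 1 (N - 1), b n
        ≤ B + α * ((∑ n ∈ Icc 1 (N - 1), (1 + α) ^ n) * B) := by
      have := mul_le_mul_of_nonneg_left hbsum hαpos.le
      linarith
    have h2 : B + α * ((∑ n ∈ Icc 1 (N - 1), (1 + α) ^ n) * B) ≤ (1 + α) ^ N * B := by
      have he : B + α * ((∑ n ∈ Icc 1 (N - 1), (1 + α) ^ n) * B)
          = (1 + α * ∑ n ∈ Icc 1 (N - 1), (1 + α) ^ n) * B := by ring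
      rw [he]
      exact mul_le_mul_of_nonneg_right hgeo hBnn
    linarith
  -- exponential bound
  have hexp : (1 + α) ^ N ≤ Real.exp ε := by
    have h1 : (1 + α) ≤ Real.exp α := by
      have := Real.add_one_le_exp α; linarith
    calc (1 + α) ^ N ≤ (Real.exp α) ^ N :=
          pow_le_pow_left₀ (by linarith) h1 N
      _ = Real.exp ((N : ℝ) * α) := by rw [← Real.exp_nat_mul]
      _ = Real.exp ε := by rw [hαN]
  have : b N + α * ∑ n ∈ Icc 1 (N - 1), τ * v n ≤ Real.exp ε * B := by
    calc b N + α * ∑ n ∈ Icc 1 (N - 1), τ * v n ≤ (1 + α) ^ N * B := hfinal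
      _ ≤ Real.exp ε * B := mul_le_mul_of_nonneg_right hexp hBnn
  have hbN : a N + τ * v N = b N := rfl
  linarith
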